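/- Let M be a lattice, ℓ ∈ M a primitive vector with ℓ² > 0, and a ∈ M. Suppose that M contains a copy of the hyperbolic plane orthogonal to both ℓ and a; that is, there exist e, f ∈ M with e² = f² = 0, e·f = 1, and e·ℓ = e·a = f·ℓ = f·a = 0. Then for every positive integer N there exist a vector h ∈ M and infinitely many positive integers n (i.e., for every n₀ there exists n ≥ n₀) such that: (i) the subgroup L = ℤℓ + ℤ(n a + h) is a primitive sublattice of M, and (ii) L contains no nonzero vector v with −N ≤ v² ≤ 0. -/

import Mathlib

lemma keyPrime (m : ℕ) (hm : 0 < m) :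
    ∃ P : ℕ, P.Prime ∧ P ≠ 2 ∧ ¬ IsSquare ((-(m : ℤ)) : ZMod P) := by
  set n : ℕ := 8 * m - 1 with hn
  have hn8 : n % 8 = 7 := by omega
  have hodd : Odd n := by rw [Nat.odd_iff]; omega
  set α : ℕ := m.factorization 2 with hα
  set u : ℕ := m / 2 ^ α with hu
  have hmu : 2 ^ α * u = m := Nat.ordProj_mul_ordCompl_eq_self m 2
  have huodd : ¬ 2 ∣ u := Nat.not_dvd_ordCompl Nat.prime_two hm.ne'
  have hudvd : u ∣ m := Nat.ordCompl_dvd m 2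
  -- J(n | u) = J(-1 | u)
  have hnu : jacobiSym (n : ℤ) u = jacobiSym (-1) u := by
    apply jacobiSym.mod_left'
    have h8m : (u : ℤ) ∣ (8 * m : ℤ) := Dvd.dvd.mul_left (Int.natCast_dvd_natCast.mpr hudvd) 8
    have hcast : (n : ℤ) = 8 * m - 1 := by push_cast [hn]; omega
    have : (n : ℤ) ≡ -1 [ZMOD (u : ℤ)] := by
      apply Int.ModEq.symm
      rw [Int.modEq_iff_dvd, hcast]
      simpa using h8m
    exact this
  have huo : Odd u := Nat.odd_iff.mpr (by omega)
  have hun : jacobiSym (u : ℤ) n = 1 := by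
    rcases Nat.odd_mod_four_iff.mp (Nat.odd_iff.mp huo) with h1 | h3
    · rw [jacobiSym.quadratic_reciprocity_one_mod_four h1 hodd, hnu,
        jacobiSym.at_neg_one huo, ZMod.χ₄_nat_one_mod_four h1]
    · rw [jacobiSym.quadratic_reciprocity_three_mod_four h3 (by omega : n % 4 = 3), hnu,
        jacobiSym.at_neg_one huo, ZMod.χ₄_nat_three_mod_four h3]
      norm_num
  have hJ : jacobiSym (-(m : ℤ)) n = -1 := by
    have hdecomp : (-(m : ℤ)) = (-1) * ((2 : ℤ) ^ α * (u : ℤ)) := by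
      push_cast [← hmu]; ring
    have h2 : n % 2 = 1 := by omega
    rw [hdecomp, jacobiSym.mul_left, jacobiSym.mul_left, jacobiSym.pow_left,
      jacobiSym.at_neg_one hodd, jacobiSym.at_two hodd,
      ZMod.χ₄_nat_three_mod_four (by omega : n % 4 = 3),
      ZMod.χ₈_nat_eq_if_mod_eight, hun]
    simp [hn8, h2]
  obtain ⟨P, hP, hPn, hJP⟩ := jacobiSym.eq_neg_one_at_prime_divisor_of_eq_neg_one hJ
  refine ⟨P, hP, ?_, by simpa using ZMod.nonsquare_of_jacobiSym_eq_neg_one hJP⟩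
  rintro rfl
  have : ¬ 2 ∣ n := by omega
  exact this hPn

set_option maxHeartbeats 1600000 in
theorem statement1
    {M : Type*} [AddCommGroup M] [Module ℤ M] [Module.Free ℤ M] [Module.Finite ℤ M]
    (B : M →ₗ[ℤ] M →ₗ[ℤ] ℤ)
    (hsymm : ∀ x y : M, B x y = B y x)
    (hnondeg : ∀ x : M, (∀ y : M, B x y = 0) → x = 0)
    (ℓ a e f : M)
    (hprim : ∀ (c : ℤ) (x : M), ℓ = c • x → 0 < c → c = 1)
    (hpos : 0 < B ℓ ℓ)
    (hee : B e e = 0) (hff : B f f = 0) (hef : B e f = 1)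
    (heℓ : B e ℓ = 0) (hea : B e a = 0) (hfℓ : B f ℓ = 0) (hfa : B f a = 0)
    (N : ℕ) (hN : 0 < N) :
    ∃ h : M, ∀ n₀ : ℕ, ∃ n : ℕ, n₀ ≤ n ∧ 0 < n ∧
      (∀ (r : ℤ) (v : M), r ≠ 0 →
          r • v ∈ Submodule.span ℤ ({ℓ, (n : ℤ) • a + h} : Set M) →
          v ∈ Submodule.span ℤ ({ℓ, (n : ℤ) • a + h} : Set M)) ∧
      (∀ v ∈ Submodule.span ℤ ({ℓ, (n : ℤ) • a + h} : Set M), v ≠ 0 →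
          ¬(-(N : ℤ) ≤ B v v ∧ B v v ≤ 0)) := by
  classical
  rename_i instACG instMod instFree instFin
  have hMod : instMod = AddCommGroup.toIntModule M := (AddCommGroup.uniqueIntModule).uniq instMod
  subst hMod
  haveI : NoZeroSMulDivisors ℤ M :=
    have : IsAddTorsionFree M := Module.isTorsionFree_int_iff_isAddTorsionFree.mp inferInstance
    IsAddTorsionFree.to_noZeroSMulDivisors_int
  -- names for the basic quantities
  set p : ℤ := B ℓ ℓ with hpdef
  set t : ℤ := B ℓ a with htdef
  set A : ℤ := B a a with hAdef
  have hℓe : B ℓ e = 0 := by rw [hsymm]; exact heℓ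
  have hℓf : B ℓ f = 0 := by rw [hsymm]; exact hfℓ
  have hae : B a e = 0 := by rw [hsymm]; exact hea
  have haf : B a f = 0 := by rw [hsymm]; exact hfa
  have hfe : B f e = 1 := by rw [hsymm]; exact hef
  have haℓ : B a ℓ = t := by rw [htdef, hsymm]
  set pN : ℕ := p.toNat with hpNdef
  have hpN : (pN : ℤ) = p := Int.toNat_of_nonneg hpos.le
  have hpNpos : 0 < pN := by omega
  set NpN : ℕ := N * pN with hNpNdef
  have hNpNpos : 0 < NpN := Nat.mul_pos hN hpNpos
  -- choose for each j ≥ 1 a prime P with -j(2p)² (hence -j) a nonsquare mod P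
  have key : ∀ j : ℕ, ∃ P : ℕ, P.Prime ∧ P ≠ 2 ∧
      ¬ IsSquare ((-(((j + 1) * (2 * pN) ^ 2 : ℕ) : ℤ)) : ZMod P) := by
    intro j
    exact keyPrime _ (by positivity)
  choose Pf hPfprime _hPfne2 hPfns using key
  -- derived properties
  have hPf2 : ∀ jj : ℕ, 1 ≤ jj →
      ¬ ((Pf (jj - 1)) ∣ 2 * pN) ∧ ¬ IsSquare ((-(jj : ℤ)) : ZMod (Pf (jj - 1))) := by
    intro jj hjj
    have hidx : jj - 1 + 1 = jj := by omega
    have hns := hPfns (jj - 1)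
    rw [hidx] at hns
    set P : ℕ := Pf (jj - 1) with hPdef
    have hnd : ¬ (P ∣ 2 * pN) := by
      intro hd
      obtain ⟨c, hc⟩ := hd
      apply hns
      have hzero : ((2 * pN : ℕ) : ZMod P) = 0 := by
        rw [hc]; push_cast; simp [ZMod.natCast_self]
      refine ⟨0, ?_⟩
      push_cast
      push_cast at hzero
      rw [hzero]
      ring
    refine ⟨hnd, ?_⟩
    rintro ⟨rr, hrr⟩
    apply hns
    refine ⟨rr * ((2 * pN : ℕ) : ZMod P), ?_⟩
    push_cast
    push_cast at hrr
    linear_combination (((2 : ZMod P) * (pN : ZMod P)) ^ 2) * hrr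
  -- the product of the chosen primes
  set R : ℕ := ∏ j ∈ Finset.range NpN, Pf j with hRdef
  have hRpos : 0 < R := Finset.prod_pos fun j _ => (hPfprime j).pos
  obtain ⟨P₀, hP₀ge, hP₀prime⟩ := Nat.exists_infinite_primes (R + 2 * pN + 1)
  have hP₀R : ¬ (P₀ ∣ R) := fun hd => by
    have := Nat.le_of_dvd hRpos hd; omega
  have hP₀2p : ¬ (P₀ ∣ 2 * pN) := fun hd => by
    have := Nat.le_of_dvd (by positivity) hd; omega
  -- coprimality and Bezout
  have hcopN : Nat.Coprime (2 * pN) (P₀ * (P₀ * R)) := by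
    have c0 : Nat.Coprime (2 * pN) P₀ :=
      ((Nat.Prime.coprime_iff_not_dvd hP₀prime).mpr hP₀2p).symm
    have cR : Nat.Coprime (2 * pN) R := by
      apply Nat.Coprime.prod_right
      intro j _
      exact ((Nat.Prime.coprime_iff_not_dvd (hPfprime j)).mpr (hPf2 (j + 1) (by omega)).1).symm
    exact Nat.Coprime.mul_right c0 (Nat.Coprime.mul_right c0 cR)
  have hcopZ : IsCoprime (2 * p) ((P₀ : ℤ) * ((P₀ : ℤ) * (R : ℤ))) := by
    have := Nat.isCoprime_iff_coprime.mpr hcopN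
    push_cast at this
    rwa [hpN] at this
  set S : ℤ := (P₀ : ℤ) * (R : ℤ) with hSdef
  have hSpos : 0 < S := by
    have h1 : (0:ℤ) < P₀ := by exact_mod_cast hP₀prime.pos
    have h2 : (0:ℤ) < R := by exact_mod_cast hRpos
    positivity
  obtain ⟨uu, vv, huv⟩ := hcopZ
  set kk : ℤ := -S * uu with hkkdef
  refine ⟨e + kk • f, ?_⟩
  intro n₀
  set SN : ℕ := S.toNat with hSNdef
  have hSN : (SN : ℤ) = S := Int.toNat_of_nonneg hSpos.le
  have hSNpos : 0 < SN := by omega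
  set n : ℕ := SN * max n₀ 1 with hndef
  have hnge : n₀ ≤ n := le_trans (Nat.le_max_left n₀ 1) (Nat.le_mul_of_pos_left _ hSNpos)
  have hnpos : 0 < n := Nat.mul_pos hSNpos (by omega)
  -- bilinear form values on the generators
  set w : M := (n : ℤ) • a + (e + kk • f) with hwdef
  have hBfw : B f w = 1 := by
    simp [hwdef, map_add, map_smul, smul_eq_mul, hfa, hfe, hff]
  have hBℓw : B ℓ w = (n : ℤ) * t := by
    simp [hwdef, map_add, map_smul, smul_eq_mul, hℓe, hℓf, htdef]
  have hBwℓ : B w ℓ = (n : ℤ) * t := by rw [hsymm]; exact hBℓw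
  have hBww : B w w = (n : ℤ) ^ 2 * A + 2 * kk := by
    simp only [hwdef, map_add, map_smul, LinearMap.add_apply, LinearMap.smul_apply,
      smul_eq_mul, hae, haf, hee, hff, hef, hfe, hea, hfa]
    ring
  -- the key quantity E
  set I : ℤ := ((max n₀ 1 : ℕ) : ℤ) with hIdef
  have hnI : ((n : ℕ) : ℤ) = S * I := by rw [hndef, hIdef, Nat.cast_mul, hSN]
  set E : ℤ := (t ^ 2 - A * p) * (n : ℤ) ^ 2 - 2 * p * kk with hEdef
  set T : ℤ := (t ^ 2 - A * p) * S * I ^ 2 + 1 - vv * ((P₀ : ℤ) * S) with hTdef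
  have hET : E = S * T := by
    rw [hEdef, hTdef, hnI, hkkdef]
    linear_combination S * huv
  have hP₀S : (P₀ : ℤ) ∣ S := ⟨(R : ℤ), rfl⟩
  have hP₀T : ¬ ((P₀ : ℤ) ∣ T) := by
    intro hd
    have h1 : (P₀ : ℤ) ∣ ((t ^ 2 - A * p) * S * I ^ 2 - vv * ((P₀ : ℤ) * S)) := by
      exact dvd_sub ((hP₀S.mul_left _).mul_right _) ⟨vv * S, by ring⟩
    have h2 : (P₀ : ℤ) ∣ 1 := by
      have : (1 : ℤ) = T - ((t ^ 2 - A * p) * S * I ^ 2 - vv * ((P₀ : ℤ) * S)) := by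
        rw [hTdef]; ring
      rw [this]
      exact dvd_sub hd h1
    have := Int.le_of_dvd one_pos h2
    have : (2 : ℤ) ≤ P₀ := by exact_mod_cast hP₀prime.two_le
    omega
  have hP₀prZ : Prime ((P₀ : ℕ) : ℤ) := Nat.prime_iff_prime_int.mp hP₀prime
  have hEnonsq : ¬ IsSquare E := by
    rintro ⟨d, hd⟩
    have hP₀E : (P₀ : ℤ) ∣ E := hET ▸ Dvd.dvd.mul_right hP₀S T
    have hP₀d : (P₀ : ℤ) ∣ d := hP₀prZ.dvd_of_dvd_pow (n := 2) (by rw [sq, ← hd]; exact hP₀E)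
    obtain ⟨d', hd'⟩ := hP₀d
    have hRT : (P₀ : ℤ) ∣ (R : ℤ) * T := by
      have hSRT : E = (P₀ : ℤ) * ((R : ℤ) * T) := by rw [hET, hSdef]; ring
      have hcancel : (P₀ : ℤ) * ((R : ℤ) * T) = (P₀ : ℤ) * ((P₀ : ℤ) * d' ^ 2) := by
        linear_combination (-1) * hSRT + hd + (d + (P₀ : ℤ) * d') * hd'
      have := mul_left_cancel₀ (by exact_mod_cast hP₀prime.ne_zero : ((P₀:ℕ):ℤ) ≠ 0) hcancel
      exact this ▸ ⟨d' ^ 2, rfl⟩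
    rcases hP₀prZ.dvd_mul.mp hRT with h | h
    · exact hP₀R (by exact_mod_cast h)
    · exact hP₀T h
  have hjdvd : ∀ jj : ℕ, 1 ≤ jj → jj ≤ NpN → ((Pf (jj - 1) : ℕ) : ℤ) ∣ E := by
    intro jj h1 h2
    have hmem : jj - 1 ∈ Finset.range NpN := Finset.mem_range.mpr (by omega)
    have hdR : (Pf (jj - 1)) ∣ R := Finset.dvd_prod_of_mem Pf hmem
    have : ((Pf (jj - 1) : ℕ) : ℤ) ∣ S := by
      rw [hSdef]
      exact Dvd.dvd.mul_left (Int.natCast_dvd_natCast.mpr hdR) _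
    rw [hET]
    exact Dvd.dvd.mul_right this T
  refine ⟨n, hnge, hnpos, ?_, ?_⟩
  · -- primitivity
    intro r v hr hmem
    rw [Submodule.mem_span_pair] at hmem ⊢
    obtain ⟨x, y, hxy⟩ := hmem
    have hy : y = r * B f v := by
      have h1 : B f (x • ℓ + y • w) = y := by
        simp [map_add, map_smul, smul_eq_mul, hBfw, hfℓ]
      have h2 : B f (r • v) = r * B f v := by simp [map_smul, smul_eq_mul]
      rw [hxy] at h1
      rw [h2] at h1
      exact h1.symm
    set y' : ℤ := B f v with hy'def
    have hru : r • (v - y' • w) = x • ℓ := by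
      have h3 : r • v - (r * y') • w = x • ℓ := by
        rw [← hy, ← hxy]; abel
      rw [smul_sub, smul_smul]
      exact h3
    set u : M := v - y' • w with hudef
    set g : ℤ := (Int.gcd r x : ℤ) with hgdef
    have hgne : g ≠ 0 := by
      rw [hgdef]
      simp only [ne_eq, Int.natCast_eq_zero]
      intro h0
      exact hr (Int.gcd_eq_zero_iff.mp h0).1
    obtain ⟨r', hr'⟩ : g ∣ r := Int.gcd_dvd_left r x
    obtain ⟨x', hx'⟩ : g ∣ x := Int.gcd_dvd_right r x
    have hbez : g = r * Int.gcdA r x + x * Int.gcdB r x := Int.gcd_eq_gcd_ab r x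
    set σ : ℤ := Int.gcdA r x with hσdef
    set τ : ℤ := Int.gcdB r x with hτdef
    have hcomb : r' * σ + x' * τ = 1 := by
      have hgg : g * (r' * σ + x' * τ) = g * 1 := by
        linear_combination (-1 : ℤ) * hbez - σ * hr' - τ * hx'
      exact mul_left_cancel₀ hgne hgg
    have hru2 : (g * r') • u = (g * x') • ℓ := by rw [← hr', ← hx']; exact hru
    have hru' : r' • u = x' • ℓ := by
      apply smul_right_injective M hgne
      show g • r' • u = g • x' • ℓ
      rw [smul_smul, smul_smul]
      exact hru2
    have hℓeq : ℓ = r' • (σ • ℓ + τ • u) := by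
      have hstep : r' • (σ • ℓ + τ • u) = (r' * σ) • ℓ + τ • (r' • u) := by
        simp only [smul_add, smul_smul]
        rw [mul_comm τ r']
      rw [hstep, hru', smul_smul, ← add_smul]
      rw [mul_comm τ x', hcomb, one_smul]
    have hr'ne : r' ≠ 0 := by
      rintro rfl
      rw [mul_zero] at hr'
      exact hr hr'
    have hr'sq : r' * r' = 1 := by
      rcases lt_trichotomy r' 0 with hlt | heq | hgt
      · have h1 : ℓ = (-r') • (-(σ • ℓ + τ • u)) := by rw [smul_neg, ← neg_smul, neg_neg]; exact hℓeq
        have h2 := hprim (-r') _ h1 (by omega)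
        have h3 : r' = -1 := by omega
        rw [h3]; norm_num
      · exact absurd heq hr'ne
      · have h2 := hprim r' _ hℓeq hgt
        rw [h2]; norm_num
    have huval : u = (r' * x') • ℓ := by
      have h1 : r' • (r' • u) = r' • (x' • ℓ) := by rw [hru']
      rw [smul_smul, hr'sq, one_smul, smul_smul] at h1
      exact h1
    refine ⟨r' * x', y', ?_⟩
    rw [← huval, hudef]
    abel
  · -- no short vectors
    intro v hv hvne hcon
    obtain ⟨hv1, hv2⟩ := hcon
    rw [Submodule.mem_span_pair] at hv
    obtain ⟨x, y, hxy⟩ := hv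
    have hvv : B v v = p * x ^ 2 + 2 * ((n : ℤ) * t) * x * y + ((n : ℤ) ^ 2 * A + 2 * kk) * y ^ 2 := by
      have haℓ2 : B a ℓ = B ℓ a := hsymm a ℓ
      rw [← hxy]
      simp only [map_add, map_smul, LinearMap.add_apply, LinearMap.smul_apply, smul_eq_mul,
        hℓe, hℓf, hae, haf, hee, hff, hef, hfe, hea, hfa, heℓ, hfℓ, haℓ2]
      ring
    by_cases hy0 : y = 0
    · have hx0 : x ≠ 0 := by
        rintro rfl
        apply hvne
        rw [← hxy, hy0]
        simp
      have hx2 : 0 < x ^ 2 := by positivity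
      have hppos : 0 < p * x ^ 2 := mul_pos hpos hx2
      rw [hy0] at hvv
      have hvv' : B v v = p * x ^ 2 := by rw [hvv]; ring
      linarith
    · set s : ℤ := p * x + (n : ℤ) * t * y with hsdef
      have hident : p * B v v = s ^ 2 - E * y ^ 2 := by
        rw [hvv, hsdef, hEdef]; ring
      have hy2 : 1 ≤ y ^ 2 := by
        have h1 : 1 ≤ |y| := Int.one_le_abs hy0
        calc (1 : ℤ) = 1 ^ 2 := by norm_num
          _ ≤ |y| ^ 2 := by apply pow_le_pow_left₀ (by norm_num) h1
          _ = y ^ 2 := sq_abs y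
      have hb1 : p * -(N : ℤ) ≤ p * B v v := mul_le_mul_of_nonneg_left hv1 hpos.le
      have hb2 : p * B v v ≤ 0 := by
        have := mul_le_mul_of_nonneg_left hv2 hpos.le
        simpa using this
      rcases lt_trichotomy E 0 with hElt | hEeq | hEgt
      · have hEy2 : E * y ^ 2 ≤ E * 1 := mul_le_mul_of_nonpos_left hy2 hElt.le
        linarith [sq_nonneg s]
      · exact hEnonsq ⟨0, by rw [hEeq]; ring⟩
      · set jZ : ℤ := E * y ^ 2 - s ^ 2 with hjZdef
        have hj0 : 0 ≤ jZ := by linarith [hjZdef, hident, hb2]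
        have hjNp : jZ ≤ (NpN : ℤ) := by
          have hc : (NpN : ℤ) = (N : ℤ) * p := by rw [hNpNdef]; push_cast [hpN]; ring
          rw [hc]
          linarith [hjZdef, hident, hb1]
        rcases eq_or_lt_of_le hj0 with hjz | hjpos
        · -- jZ = 0 : E is a square, contradiction
          have hEy : E * y ^ 2 = s ^ 2 := by
            have := hjZdef
            linarith [hjz, this]
          have hdvd : y ^ 2 ∣ s ^ 2 := ⟨E, by rw [← hEy]; ring⟩
          have hys : y ∣ s := (Int.pow_dvd_pow_iff (two_ne_zero)).mp hdvd
          obtain ⟨dd, hdd⟩ := hys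
          apply hEnonsq
          refine ⟨dd, ?_⟩
          have hy2ne : y ^ 2 ≠ 0 := by positivity
          have : y ^ 2 * E = y ^ 2 * (dd * dd) := by rw [mul_comm (y^2) E, hEy, hdd]; ring
          exact mul_left_cancel₀ hy2ne this
        · -- 1 ≤ jZ ≤ NpN : contradiction with the chosen prime
          set jn : ℕ := jZ.toNat with hjndef
          have hjncast : (jn : ℤ) = jZ := Int.toNat_of_nonneg hj0
          have hjn1 : 1 ≤ jn := by omega
          have hjn2 : jn ≤ NpN := by omega
          obtain ⟨hPnd, hPns⟩ := hPf2 jn hjn1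
          set P : ℕ := Pf (jn - 1) with hPdef
          have hPE : ((P : ℕ) : ℤ) ∣ E := hjdvd jn hjn1 hjn2
          apply hPns
          refine ⟨(s : ZMod P), ?_⟩
          have hs2 : s ^ 2 = E * y ^ 2 - (jn : ℤ) := by
            rw [hjncast]
            linarith [hjZdef]
          have hE0 : ((E : ℤ) : ZMod P) = 0 := (ZMod.intCast_zmod_eq_zero_iff_dvd E P).mpr hPE
          have hcast := congrArg (fun z : ℤ => (z : ZMod P)) hs2
          push_cast at hcast
          rw [hE0] at hcast
          push_cast
          linear_combination -hcast
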